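/- Let N, m ∈ ℕ with m < N and let w = (w_i)_{i=1}^N be a vector of positive weights with nonincreasing rearrangement w_{(1)} ≥ w_{(2)} ≥ … ≥ w_{(N)}. Then the Gelfand m-width of the weighted ℓ^∞ ball B^∞_N(w) in the Euclidean space ℓ^2_N satisfies d^m(B^∞_N(w), ℓ^2_N) = ( ∑_{j=m+1}^{N} w_{(j)}^2 )^{1/2}. -/

import Mathlib

open Finset
open scoped ENNReal

noncomputable section

/-- The weighted `ℓ^p` (quasi-)norm on `ℝ^N` with positive weights `w` and exponent
`p ∈ (0,∞]`: `‖x‖_{p,w} = (∑ i, (|x i| / w i)^p)^(1/p)` for `p < ∞`, and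
`sup_i |x i| / w i` for `p = ∞`. -/
def wnorm {N : ℕ} (p : ℝ≥0∞) (w : Fin N → ℝ) (x : Fin N → ℝ) : ℝ :=
  if p = ⊤ then ⨆ i, |x i| / w i
  else (∑ i, (|x i| / w i) ^ p.toReal) ^ (1 / p.toReal)

/-- The weighted `ℓ^p` unit ball `B^p_N(w)` in `ℝ^N`. -/
def wball {N : ℕ} (p : ℝ≥0∞) (w : Fin N → ℝ) : Set (Fin N → ℝ) :=
  {x | wnorm p w x ≤ 1}

/-- The Kolmogorov `m`-width of a subset `K` of `ℝ^N` equipped with the norm `nrm`. -/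
def kolWidth {N : ℕ} (m : ℕ) (K : Set (Fin N → ℝ)) (nrm : (Fin N → ℝ) → ℝ) : ℝ :=
  sInf { r | ∃ X : Submodule ℝ (Fin N → ℝ), Module.finrank ℝ X ≤ m ∧
    r = ⨆ x : K, ⨅ z : X, nrm ((x : Fin N → ℝ) - (z : Fin N → ℝ)) }

/-- The Gelfand `m`-width of a subset `K` of `ℝ^N` equipped with the norm `nrm`:
the infimum over linear maps `A : ℝ^N → ℝ^m` of `sup { nrm x : x ∈ K ∩ ker A }`
(equivalently, the infimum over subspaces of codimension at most `m`). -/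
def gelWidth {N : ℕ} (m : ℕ) (K : Set (Fin N → ℝ)) (nrm : (Fin N → ℝ) → ℝ) : ℝ :=
  sInf { r | ∃ A : (Fin N → ℝ) →ₗ[ℝ] (Fin m → ℝ),
    r = ⨆ x : (K ∩ (LinearMap.ker A : Set (Fin N → ℝ)) : Set (Fin N → ℝ)),
          nrm (x : Fin N → ℝ) }

lemma sum_le_sum_first {N k : ℕ} (g : Fin N → ℝ) (hg0 : ∀ i, 0 ≤ g i)
    (hga : ∀ i j : Fin N, i ≤ j → g j ≤ g i) (T : Finset (Fin N)) (hT : T.card ≤ k) :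
    ∑ j ∈ T, g j ≤ ∑ j ∈ univ.filter (fun j : Fin N => (j : ℕ) < k), g j := by
  classical
  induction k generalizing T with
  | zero =>
      simp only [Nat.le_zero, Finset.card_eq_zero] at hT
      subst hT
      simp only [Finset.sum_empty]
      exact Finset.sum_nonneg fun j _ => hg0 j
  | succ k ih =>
      rcases Nat.lt_or_ge T.card (k+1) with h | h
      · calc ∑ j ∈ T, g j ≤ ∑ j ∈ univ.filter (fun j : Fin N => (j : ℕ) < k), g j :=
              ih T (Nat.lt_succ_iff.mp h)
          _ ≤ _ := by
              apply Finset.sum_le_sum_of_subset_of_nonneg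
              · intro j hj
                simp only [Finset.mem_filter] at hj ⊢
                exact ⟨hj.1, hj.2.trans (Nat.lt_succ_self k)⟩
              · intro j _ _; exact hg0 j
      · have hcard : T.card = k + 1 := le_antisymm hT h
        have hTne : T.Nonempty := Finset.card_pos.mp (by omega)
        set j₀ := T.max' hTne with hj₀
        have hj₀T : j₀ ∈ T := T.max'_mem hTne
        have hsub : T ⊆ Finset.Iic j₀ := fun j hj =>
          Finset.mem_Iic.mpr (T.le_max' j hj)
        have hcard2 : k + 1 ≤ (j₀ : ℕ) + 1 := by
          have := Finset.card_le_card hsub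
          rwa [Fin.card_Iic, hcard] at this
        have hkN : k < N := lt_of_le_of_lt (by omega) j₀.isLt
        have hkj₀ : (⟨k, hkN⟩ : Fin N) ≤ j₀ := by
          simp only [Fin.le_def]; omega
        have hins : univ.filter (fun j : Fin N => (j : ℕ) < k + 1)
            = insert (⟨k, hkN⟩ : Fin N) (univ.filter (fun j : Fin N => (j : ℕ) < k)) := by
          ext j
          simp only [Finset.mem_filter, Finset.mem_insert, Finset.mem_univ, true_and,
            Fin.ext_iff]
          omega
        rw [hins, Finset.sum_insert (by simp)]
        have hTsplit : ∑ j ∈ T, g j = g j₀ + ∑ j ∈ T.erase j₀, g j :=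
          (Finset.add_sum_erase T g hj₀T).symm
        rw [hTsplit]
        have h1 : g j₀ ≤ g ⟨k, hkN⟩ := hga _ _ hkj₀
        have h2 : ∑ j ∈ T.erase j₀, g j ≤
            ∑ j ∈ univ.filter (fun j : Fin N => (j : ℕ) < k), g j := by
          apply ih
          rw [Finset.card_erase_of_mem hj₀T, hcard]; omega
        linarith

lemma wnorm_two_eq {N : ℕ} (x : Fin N → ℝ) :
    wnorm 2 (fun _ => 1) x = (∑ i, x i ^ 2) ^ (1/2 : ℝ) := by
  unfold wnorm
  rw [if_neg (by simp)]
  have h2 : (2 : ℝ≥0∞).toReal = 2 := by simp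
  rw [h2]
  congr 1
  refine Finset.sum_congr rfl fun i _ => ?_
  rw [div_one]
  rw [show ((2:ℝ)) = ((2:ℕ):ℝ) by norm_num, Real.rpow_natCast, sq_abs]

lemma mem_wball_top {N : ℕ} [Nonempty (Fin N)] {w : Fin N → ℝ} (hw : ∀ i, 0 < w i)
    (x : Fin N → ℝ) : x ∈ wball ⊤ w ↔ ∀ i, |x i| ≤ w i := by
  unfold wball wnorm
  simp only [Set.mem_setOf_eq, if_true, reduceIte]
  rw [ciSup_le_iff (Set.Finite.bddAbove (Set.finite_range _))]
  exact forall_congr' fun i => div_le_one (hw i)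

lemma lower_aux {N m : ℕ} (hm : m < N) {w : Fin N → ℝ} (hw : ∀ i, 0 < w i)
    (σ : Equiv.Perm (Fin N)) (hσ : ∀ i j : Fin N, i ≤ j → w (σ j) ≤ w (σ i))
    (A : (Fin N → ℝ) →ₗ[ℝ] (Fin m → ℝ)) :
    ∃ x ∈ wball ⊤ w ∩ (LinearMap.ker A : Set (Fin N → ℝ)),
      ∑ j ∈ univ.filter (fun j : Fin N => m ≤ (j : ℕ)), w (σ j) ^ 2 ≤ ∑ i, x i ^ 2 := by
  classical
  haveI : Nonempty (Fin N) := ⟨⟨0, by omega⟩⟩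
  set Kset : Set (Fin N → ℝ) := wball ⊤ w ∩ (LinearMap.ker A : Set (Fin N → ℝ)) with hKset
  -- compactness
  have hballeq : wball ⊤ w = Set.univ.pi (fun i => Set.Icc (-(w i)) (w i)) := by
    ext x
    rw [mem_wball_top hw]
    simp only [Set.mem_pi, Set.mem_univ, true_implies, Set.mem_Icc, abs_le]
  have hKcomp : IsCompact Kset := by
    rw [hKset, hballeq]
    exact (isCompact_univ_pi fun i => isCompact_Icc).inter_right
      (Submodule.closed_of_finiteDimensional _)
  have hKne : Kset.Nonempty := by
    refine ⟨0, ?_, by simp⟩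
    rw [mem_wball_top hw]
    intro i; simpa using (hw i).le
  have hcont : Continuous (fun x : Fin N → ℝ => ∑ i, x i ^ 2) := by fun_prop
  obtain ⟨x₀, hx₀K, hmax⟩ := hKcomp.exists_isMaxOn hKne hcont.continuousOn
  have hx₀ball : ∀ i, |x₀ i| ≤ w i := (mem_wball_top hw x₀).mp hx₀K.1
  have hx₀ker : A x₀ = 0 := hx₀K.2
  set S : Finset (Fin N) := univ.filter (fun i => |x₀ i| = w i) with hS
  -- key perturbation argument
  have key : ∀ v : Fin N → ℝ, v ≠ 0 → A v = 0 → (∀ i, |x₀ i| = w i → v i = 0) →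
      0 ≤ ∑ i, x₀ i * v i → False := by
    intro v hv0 hvker hvS hc
    set F : Finset (Fin N) := univ.filter (fun i => |x₀ i| < w i) with hF
    obtain ⟨i₀, hi₀⟩ : ∃ i, v i ≠ 0 := Function.ne_iff.mp hv0
    have hi₀F : i₀ ∈ F := by
      simp only [hF, Finset.mem_filter, Finset.mem_univ, true_and]
      rcases lt_or_eq_of_le (hx₀ball i₀) with h | h
      · exact h
      · exact absurd (hvS i₀ h) hi₀
    have hFne : F.Nonempty := ⟨i₀, hi₀F⟩
    set M : ℝ := 1 + ∑ i, |v i| with hM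
    have hMpos : 0 < M := by
      have : (0:ℝ) ≤ ∑ i, |v i| := Finset.sum_nonneg fun i _ => abs_nonneg _
      linarith
    have hMv : ∀ i, |v i| ≤ M := by
      intro i
      have : |v i| ≤ ∑ i, |v i| :=
        Finset.single_le_sum (fun i _ => abs_nonneg (v i)) (Finset.mem_univ i)
      linarith
    set δ : ℝ := F.inf' hFne (fun i => w i - |x₀ i|) with hδdef
    have hδpos : 0 < δ := by
      rw [hδdef, Finset.lt_inf'_iff]
      intro i hi
      simp only [hF, Finset.mem_filter] at hi
      linarith [hi.2]
    set t : ℝ := δ / M with ht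
    have htpos : 0 < t := div_pos hδpos hMpos
    set y : Fin N → ℝ := x₀ + t • v with hy
    have hyK : y ∈ Kset := by
      constructor
      · rw [mem_wball_top hw]
        intro i
        rcases lt_or_eq_of_le (hx₀ball i) with h | h
        · have hiF : i ∈ F := by simp [hF, h]
          have hδle : δ ≤ w i - |x₀ i| := Finset.inf'_le _ hiF
          have : |y i| ≤ |x₀ i| + t * |v i| := by
            rw [hy]
            simp only [Pi.add_apply, Pi.smul_apply, smul_eq_mul]
            calc |x₀ i + t * v i| ≤ |x₀ i| + |t * v i| := abs_add_le _ _
              _ = |x₀ i| + t * |v i| := by rw [abs_mul, abs_of_pos htpos]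
          have h2 : t * |v i| ≤ δ := by
            rw [ht]
            calc δ / M * |v i| ≤ δ / M * M :=
                  mul_le_mul_of_nonneg_left (hMv i) (le_of_lt (div_pos hδpos hMpos))
              _ = δ := div_mul_cancel₀ δ (ne_of_gt hMpos)
          linarith
        · have : v i = 0 := hvS i h
          rw [hy]
          simp only [Pi.add_apply, Pi.smul_apply, smul_eq_mul, this, mul_zero, add_zero]
          exact hx₀ball i
      · show y ∈ LinearMap.ker A
        rw [LinearMap.mem_ker, hy, map_add, map_smul, hx₀ker, hvker, smul_zero, add_zero]
    have hlt : ∑ i, x₀ i ^ 2 < ∑ i, y i ^ 2 := by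
      have hexp : ∑ i, y i ^ 2
          = ∑ i, x₀ i ^ 2 + 2 * t * (∑ i, x₀ i * v i) + t ^ 2 * ∑ i, v i ^ 2 := by
        rw [Finset.mul_sum, Finset.mul_sum, ← Finset.sum_add_distrib, ← Finset.sum_add_distrib]
        refine Finset.sum_congr rfl fun i _ => ?_
        rw [hy]; simp only [Pi.add_apply, Pi.smul_apply, smul_eq_mul]; ring
      have hv2 : 0 < ∑ i, v i ^ 2 :=
        Finset.sum_pos' (fun i _ => sq_nonneg _) ⟨i₀, Finset.mem_univ _, sq_pos_of_ne_zero hi₀⟩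
      have h2 : 0 < t ^ 2 * ∑ i, v i ^ 2 := mul_pos (pow_pos htpos 2) hv2
      have h3 : 0 ≤ 2 * t * ∑ i, x₀ i * v i :=
        mul_nonneg (by linarith) hc
      linarith
    exact absurd (hmax hyK) (not_le.mpr hlt)
  -- cardinality bound
  have hScard : N ≤ m + S.card := by
    by_contra hcon
    push_neg at hcon
    set Φ : (Fin N → ℝ) →ₗ[ℝ] (Fin m → ℝ) × (↥S → ℝ) :=
      LinearMap.prod A (LinearMap.funLeft ℝ ℝ (fun i : ↥S => (i : Fin N))) with hΦ
    have hker : LinearMap.ker Φ ≠ ⊥ := by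
      intro hbot
      have hinj : Function.Injective Φ := LinearMap.ker_eq_bot.mp hbot
      have := LinearMap.finrank_le_finrank_of_injective hinj
      rw [Module.finrank_prod, Module.finrank_fin_fun, Module.finrank_pi] at this
      simp only [Fintype.card_coe, Module.finrank_fintype_fun_eq_card, Fintype.card_fin] at this
      omega
    obtain ⟨v, hvker, hv0⟩ := (Submodule.ne_bot_iff _).mp hker
    rw [LinearMap.mem_ker, hΦ, LinearMap.prod_apply] at hvker
    have hvA : A v = 0 := congrArg Prod.fst hvker
    have hvS : ∀ i, |x₀ i| = w i → v i = 0 := by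
      intro i hi
      have hiS : i ∈ S := by simp [hS, hi]
      have := congrArg Prod.snd hvker
      exact congrFun this ⟨i, hiS⟩
    rcases le_or_gt 0 (∑ i, x₀ i * v i) with hc | hc
    · exact key v hv0 hvA hvS hc
    · have hsum : ∑ i, x₀ i * (-v) i = -∑ i, x₀ i * v i := by
        simp only [Pi.neg_apply, mul_neg]
        rw [Finset.sum_neg_distrib]
      exact key (-v) (by simpa using hv0) (by rw [map_neg, hvA, neg_zero])
        (fun i hi => by simp [hvS i hi]) (by rw [hsum]; linarith)
  -- conclude
  refine ⟨x₀, hx₀K, ?_⟩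
  have hg0 : ∀ j : Fin N, 0 ≤ w (σ j) ^ 2 := fun j => sq_nonneg _
  set U : Finset (Fin N) := Sᶜ.image σ.symm with hU
  have hUcard : U.card ≤ m := by
    rw [hU, Finset.card_image_of_injective _ σ.symm.injective, Finset.card_compl,
      Fintype.card_fin]
    omega
  have hsumU : ∑ j ∈ U, w (σ j) ^ 2 = ∑ i ∈ Sᶜ, w i ^ 2 := by
    rw [hU, Finset.sum_image (fun a _ b _ h => σ.symm.injective h)]
    exact Finset.sum_congr rfl fun i _ => by rw [Equiv.apply_symm_apply]
  have h1 : ∑ j ∈ U, w (σ j) ^ 2 ≤ ∑ j ∈ univ.filter (fun j : Fin N => (j : ℕ) < m),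
      w (σ j) ^ 2 := sum_le_sum_first _ hg0 (fun i j hij => by
        have := hσ i j hij
        have h0j := (hw (σ j)).le
        exact pow_le_pow_left₀ h0j this 2) U hUcard
  have hsplit : ∑ j ∈ univ.filter (fun j : Fin N => (j : ℕ) < m), w (σ j) ^ 2
      + ∑ j ∈ univ.filter (fun j : Fin N => m ≤ (j : ℕ)), w (σ j) ^ 2
      = ∑ j, w (σ j) ^ 2 := by
    rw [← Finset.sum_filter_add_sum_filter_not univ (fun j : Fin N => (j : ℕ) < m)]
    congr 1
    apply Finset.sum_congr _ fun _ _ => rfl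
    apply Finset.filter_congr
    intro j _
    simp [not_lt]
  have htot : ∑ j, w (σ j) ^ 2 = ∑ i, w i ^ 2 := Equiv.sum_comp σ (fun i => w i ^ 2)
  have hcompl : ∑ i ∈ S, w i ^ 2 + ∑ i ∈ Sᶜ, w i ^ 2 = ∑ i, w i ^ 2 :=
    Finset.sum_add_sum_compl S _
  have hSx : ∑ i ∈ S, w i ^ 2 ≤ ∑ i, x₀ i ^ 2 := by
    have : ∑ i ∈ S, w i ^ 2 = ∑ i ∈ S, x₀ i ^ 2 := by
      refine Finset.sum_congr rfl fun i hi => ?_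
      simp only [hS, Finset.mem_filter] at hi
      rw [← hi.2, sq_abs]
    rw [this]
    exact Finset.sum_le_sum_of_subset_of_nonneg (Finset.subset_univ S)
      (fun i _ _ => sq_nonneg _)
  linarith [hsumU, h1, hsplit, htot, hcompl, hSx]

/-- if `w` is a vector of positive weights with nonincreasing
rearrangement `w ∘ σ` and `m < N`, then the Gelfand width satisfies
`d^m(B^∞_N(w), ℓ²_N) = (∑_{j=m+1}^N w_{(j)}²)^{1/2}`. -/
theorem statement8 {N m : ℕ} (hm : m < N) (w : Fin N → ℝ) (hw : ∀ i, 0 < w i)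
    (σ : Equiv.Perm (Fin N)) (hσ : ∀ i j : Fin N, i ≤ j → w (σ j) ≤ w (σ i)) :
    gelWidth m (wball ⊤ w) (wnorm 2 (fun _ => 1)) =
      (∑ j ∈ Finset.univ.filter (fun j : Fin N => m ≤ (j : ℕ)), w (σ j) ^ 2) ^ (1/2 : ℝ) := by
  classical
  haveI : Nonempty (Fin N) := ⟨⟨0, by omega⟩⟩
  set Q : ℝ := ∑ j ∈ univ.filter (fun j : Fin N => m ≤ (j : ℕ)), w (σ j) ^ 2 with hQdef
  set B : ℝ := Q ^ (1/2 : ℝ) with hBdef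
  have hQ0 : 0 ≤ Q := Finset.sum_nonneg fun j _ => sq_nonneg _
  have hnorm_le : ∀ x ∈ wball ⊤ w,
      wnorm 2 (fun _ => 1) x ≤ (∑ i, w i ^ 2) ^ (1/2 : ℝ) := by
    intro x hx
    rw [wnorm_two_eq]
    apply Real.rpow_le_rpow (Finset.sum_nonneg fun i _ => sq_nonneg _) _ (by norm_num)
    refine Finset.sum_le_sum fun i _ => ?_
    have h := (mem_wball_top hw x).mp hx i
    nlinarith [abs_nonneg (x i), sq_abs (x i)]
  set Z : Set ℝ := { r | ∃ A : (Fin N → ℝ) →ₗ[ℝ] (Fin m → ℝ),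
    r = ⨆ x : (wball ⊤ w ∩ (LinearMap.ker A : Set (Fin N → ℝ)) : Set (Fin N → ℝ)),
          wnorm 2 (fun _ => 1) (x : Fin N → ℝ) } with hZdef
  have hbdd : ∀ A : (Fin N → ℝ) →ₗ[ℝ] (Fin m → ℝ), BddAbove (Set.range
      fun x : (wball ⊤ w ∩ (LinearMap.ker A : Set (Fin N → ℝ)) : Set (Fin N → ℝ)) =>
        wnorm 2 (fun _ => 1) (x : Fin N → ℝ)) := by
    intro A
    refine ⟨(∑ i, w i ^ 2) ^ (1/2 : ℝ), ?_⟩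
    rintro y ⟨x, rfl⟩
    exact hnorm_le x x.2.1
  -- lower bound
  have hlb : ∀ r ∈ Z, B ≤ r := by
    rintro r ⟨A, rfl⟩
    obtain ⟨x₀, hx₀mem, hx₀⟩ := lower_aux hm hw σ hσ A
    have h1 : B ≤ wnorm 2 (fun _ => 1) x₀ := by
      rw [wnorm_two_eq]
      exact Real.rpow_le_rpow hQ0 hx₀ (by norm_num)
    exact h1.trans (le_ciSup (hbdd A) ⟨x₀, hx₀mem⟩)
  -- upper bound : the special map A₀
  set A₀ : (Fin N → ℝ) →ₗ[ℝ] (Fin m → ℝ) :=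
    LinearMap.funLeft ℝ ℝ (fun j : Fin m => σ (Fin.castLE hm.le j)) with hA₀
  set xs : Fin N → ℝ := fun i => if m ≤ ((σ.symm i : Fin N) : ℕ) then w i else 0 with hxs
  have hxsmem : xs ∈ wball ⊤ w ∩ (LinearMap.ker A₀ : Set (Fin N → ℝ)) := by
    constructor
    · rw [mem_wball_top hw]
      intro i
      rw [hxs]
      dsimp only
      split
      · rw [abs_of_nonneg (hw i).le]
      · simp [(hw i).le]
    · show xs ∈ LinearMap.ker A₀
      rw [LinearMap.mem_ker]
      funext j
      rw [hA₀]
      simp only [LinearMap.funLeft_apply, Pi.zero_apply]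
      rw [hxs]
      dsimp only
      rw [Equiv.symm_apply_apply]
      have : ((Fin.castLE hm.le j : Fin N) : ℕ) = (j : ℕ) := rfl
      rw [if_neg (by omega)]
  have hxsnorm : wnorm 2 (fun _ => 1) xs = B := by
    rw [wnorm_two_eq, hBdef, hQdef]
    congr 1
    rw [← Equiv.sum_comp σ (fun i => xs i ^ 2)]
    have hterm : ∀ j : Fin N, xs (σ j) ^ 2 = if m ≤ (j : ℕ) then w (σ j) ^ 2 else 0 := by
      intro j
      rw [hxs]
      dsimp only
      rw [Equiv.symm_apply_apply]
      split
      · rfl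
      · exact zero_pow (by norm_num)
    rw [Finset.sum_congr rfl fun j _ => hterm j]
    exact (Finset.sum_filter _ _).symm
  haveI hne : Nonempty (↥(wball ⊤ w ∩ (LinearMap.ker A₀ : Set (Fin N → ℝ)))) := ⟨⟨xs, hxsmem⟩⟩
  have hsup : (⨆ x : (wball ⊤ w ∩ (LinearMap.ker A₀ : Set (Fin N → ℝ)) : Set (Fin N → ℝ)),
      wnorm 2 (fun _ => 1) (x : Fin N → ℝ)) = B := by
    apply le_antisymm
    · refine ciSup_le fun x => ?_
      obtain ⟨x, hxball, hxker⟩ := x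
      have hxker' : A₀ x = 0 := hxker
      dsimp only
      rw [wnorm_two_eq]
      apply Real.rpow_le_rpow (Finset.sum_nonneg fun i _ => sq_nonneg _) _ (by norm_num)
      rw [← Equiv.sum_comp σ (fun i => x i ^ 2)]
      have hzero : ∀ j ∈ univ, j ∉ univ.filter (fun j : Fin N => m ≤ (j : ℕ)) →
          x (σ j) ^ 2 = 0 := by
        intro j _ hj
        simp only [Finset.mem_filter, Finset.mem_univ, true_and, not_le] at hj
        have : x (σ (Fin.castLE hm.le ⟨(j : ℕ), hj⟩)) = 0 := by
          have := congrFun hxker' ⟨(j : ℕ), hj⟩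
          rw [hA₀] at this
          simpa using this
        have hjeq : Fin.castLE hm.le ⟨(j : ℕ), hj⟩ = j := by
          apply Fin.ext; rfl
        rw [hjeq] at this
        rw [this]
        exact zero_pow (by norm_num)
      rw [← Finset.sum_subset (Finset.filter_subset _ _) hzero]
      refine Finset.sum_le_sum fun j _ => ?_
      have h := (mem_wball_top hw x).mp hxball (σ j)
      nlinarith [abs_nonneg (x (σ j)), sq_abs (x (σ j))]
    · rw [← hxsnorm]
      exact le_ciSup (hbdd A₀) ⟨xs, hxsmem⟩
  have hBZ : B ∈ Z := ⟨A₀, hsup.symm⟩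
  show sInf Z = B
  exact le_antisymm (csInf_le ⟨B, hlb⟩ hBZ) (le_csInf ⟨B, hBZ⟩ hlb)

end
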